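/- arXiv:2401.10534 — 3 statements merged into one kernel-verified Lean document; each statement's English description precedes it below -/
import Mathlib

section
/- The trace of the Jordan product, (X,Y) ↦ tr(X∘Y), is a positive-definite symmetric bilinear form on the Albert algebra H₃(𝕆) of 3×3 Hermitian octonionic matrices. -/
noncomputable section

open Finset

abbrev O8 := Fin 8 → ℝ

def octTbl (i j : Fin 8) : ℝ × Fin 8 :=
  match i.val, j.val with
  | 0, _ => (1, j)
  | _, 0 => (1, i)
  | 1, 1 => (-1, 0)
  | 1, 2 => (1, 3)
  | 1, 3 => (-1, 2)
  | 1, 4 => (1, 5)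
  | 1, 5 => (-1, 4)
  | 1, 6 => (1, 7)
  | 1, 7 => (1, 6)
  | 2, 1 => (-1, 3)
  | 2, 2 => (-1, 0)
  | 2, 3 => (1, 1)
  | 2, 4 => (-1, 6)
  | 2, 5 => (1, 7)
  | 2, 6 => (1, 4)
  | 2, 7 => (1, 5)
  | 3, 1 => (1, 2)
  | 3, 2 => (-1, 1)
  | 3, 3 => (-1, 0)
  | 3, 4 => (-1, 7)
  | 3, 5 => (1, 6)
  | 3, 6 => (-1, 5)
  | 3, 7 => (1, 4)
  | 4, 1 => (-1, 5)
  | 4, 2 => (1, 6)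
  | 4, 3 => (1, 7)
  | 4, 4 => (-1, 0)
  | 4, 5 => (1, 1)
  | 4, 6 => (-1, 2)
  | 4, 7 => (-1, 3)
  | 5, 1 => (1, 4)
  | 5, 2 => (1, 7)
  | 5, 3 => (-1, 6)
  | 5, 4 => (-1, 1)
  | 5, 5 => (-1, 0)
  | 5, 6 => (1, 3)
  | 5, 7 => (-1, 2)
  | 6, 1 => (1, 7)
  | 6, 2 => (-1, 4)
  | 6, 3 => (1, 5)
  | 6, 4 => (1, 2)
  | 6, 5 => (-1, 3)
  | 6, 6 => (-1, 0)
  | 6, 7 => (-1, 1)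
  | 7, 1 => (-1, 6)
  | 7, 2 => (-1, 5)
  | 7, 3 => (-1, 4)
  | 7, 4 => (1, 3)
  | 7, 5 => (1, 2)
  | 7, 6 => (1, 1)
  | 7, 7 => (-1, 0)
  | _, _ => (0, 0)

def soTbl (i j : Fin 8) : ℝ × Fin 8 :=
  match i.val, j.val with
  | 0, _ => (1, j)
  | _, 0 => (1, i)
  | 1, 1 => (-1, 0)
  | 1, 2 => (1, 3)
  | 1, 3 => (-1, 2)
  | 1, 4 => (1, 5)
  | 1, 5 => (-1, 4)
  | 1, 6 => (-1, 7)
  | 1, 7 => (1, 6)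
  | 2, 1 => (-1, 3)
  | 2, 2 => (-1, 0)
  | 2, 3 => (1, 1)
  | 2, 4 => (-1, 6)
  | 2, 5 => (-1, 7)
  | 2, 6 => (1, 4)
  | 2, 7 => (1, 5)
  | 3, 1 => (1, 2)
  | 3, 2 => (-1, 1)
  | 3, 3 => (-1, 0)
  | 3, 4 => (-1, 7)
  | 3, 5 => (1, 6)
  | 3, 6 => (-1, 5)
  | 3, 7 => (1, 4)
  | 4, 1 => (-1, 5)
  | 4, 2 => (1, 6)
  | 4, 3 => (1, 7)
  | 4, 4 => (1, 0)
  | 4, 5 => (-1, 1)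
  | 4, 6 => (1, 2)
  | 4, 7 => (1, 3)
  | 5, 1 => (1, 4)
  | 5, 2 => (1, 7)
  | 5, 3 => (-1, 6)
  | 5, 4 => (1, 1)
  | 5, 5 => (1, 0)
  | 5, 6 => (-1, 3)
  | 5, 7 => (1, 2)
  | 6, 1 => (1, 7)
  | 6, 2 => (-1, 4)
  | 6, 3 => (1, 5)
  | 6, 4 => (-1, 2)
  | 6, 5 => (1, 3)
  | 6, 6 => (1, 0)
  | 6, 7 => (1, 1)
  | 7, 1 => (-1, 6)
  | 7, 2 => (-1, 5)
  | 7, 3 => (-1, 4)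
  | 7, 4 => (-1, 3)
  | 7, 5 => (-1, 2)
  | 7, 6 => (-1, 1)
  | 7, 7 => (1, 0)
  | _, _ => (0, 0)

def octMul (x y : O8) : O8 := fun k =>
  ∑ i : Fin 8, ∑ j : Fin 8, x i * y j * (if (octTbl i j).2 = k then (octTbl i j).1 else 0)

def soMul (x y : O8) : O8 := fun k =>
  ∑ i : Fin 8, ∑ j : Fin 8, x i * y j * (if (soTbl i j).2 = k then (soTbl i j).1 else 0)

def oe (n : Fin 8) : O8 := fun m => if m = n then 1 else 0

def oconj (x : O8) : O8 := fun k => if k = 0 then x 0 else -x k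

def onsq (x : O8) : ℝ := ∑ k : Fin 8, (x k)^2

def octUnits : Set O8 := {oe 1, oe 2, oe 3, oe 4, oe 5, oe 6, oe 7}

abbrev AM := Fin 3 → Fin 3 → O8

def mO (A B : AM) : AM := fun i j => ∑ k : Fin 3, octMul (A i k) (B k j)

def jord (A B : AM) : AM := (1/2 : ℝ) • (mO A B + mO B A)

def trA (A : AM) : ℝ := ∑ i : Fin 3, A i i 0

def idA : AM := fun i j => if i = j then oe 0 else 0

def frd (A B : AM) : AM :=
  jord A B - (1/2 : ℝ) • ((trA A) • B + (trA B) • A)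
    + ((1/2 : ℝ) * (trA A * trA B - trA (jord A B))) • idA

def herm (A : AM) : Prop := ∀ i j, A j i = oconj (A i j)

def jdet (A : AM) : ℝ :=
  A 0 0 0 * A 1 1 0 * A 2 2 0
    + 2 * (octMul (octMul (A 0 1) (A 1 2)) (A 2 0)) 0
    - A 0 0 0 * onsq (A 1 2) - A 1 1 0 * onsq (A 2 0) - A 2 2 0 * onsq (A 0 1)

abbrev T8 := Fin 8 → Fin 8 → ℝ

def tens (a x : O8) : T8 := fun s t => a s * x t

def tMul (u v : T8) : T8 := fun a b =>
  ∑ i1 : Fin 8, ∑ i2 : Fin 8, ∑ j1 : Fin 8, ∑ j2 : Fin 8,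
    u i1 j1 * v i2 j2 *
      ((if (soTbl i1 i2).2 = a then (soTbl i1 i2).1 else 0) *
       (if (octTbl j1 j2).2 = b then (octTbl j1 j2).1 else 0))

abbrev TM := Fin 3 → Fin 3 → T8

def mT (A B : TM) : TM := fun i j => ∑ k : Fin 3, tMul (A i k) (B k j)

def commT (A B : TM) : TM := mT A B - mT B A

def lab (Q : O8) (X : AM) : TM := fun i j => tens Q (X i j)

def EI (z : ℝ) (e : O8) : AM := fun i j =>
  if i = 0 ∧ j = 0 then z • oe 0
  else if i = 1 ∧ j = 1 then (-z) • oe 0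
  else if i = 0 ∧ j = 1 then e
  else if i = 1 ∧ j = 0 then oconj e
  else 0

def D112 : AM := fun i j =>
  if i = j then (if (i : ℕ) = 2 then (-2 : ℝ) • oe 0 else oe 0) else 0


lemma octMul_add_left (x y z : O8) : octMul (x + y) z = octMul x z + octMul y z := by
  funext k
  simp only [octMul, Pi.add_apply, add_mul, Finset.sum_add_distrib]

lemma octMul_add_right (x y z : O8) : octMul x (y + z) = octMul x y + octMul x z := by
  funext k
  simp only [octMul, Pi.add_apply, mul_add, add_mul, Finset.sum_add_distrib]

lemma octMul_smul_left (r : ℝ) (x y : O8) : octMul (r • x) y = r • octMul x y := by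
  funext k
  simp only [octMul, Pi.smul_apply, smul_eq_mul, Finset.mul_sum]
  exact Finset.sum_congr rfl fun i _ => Finset.sum_congr rfl fun j _ => by ring

lemma octMul_smul_right (r : ℝ) (x y : O8) : octMul x (r • y) = r • octMul x y := by
  funext k
  simp only [octMul, Pi.smul_apply, smul_eq_mul, Finset.mul_sum]
  exact Finset.sum_congr rfl fun i _ => Finset.sum_congr rfl fun j _ => by ring

set_option maxHeartbeats 1000000 in
lemma octMul_conj_self (x : O8) : octMul x (oconj x) 0 = onsq x := by
  simp only [octMul, oconj, onsq, Fin.sum_univ_eight]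
  norm_num [octTbl, Fin.ext_iff]
  ring

lemma onsq_nonneg (x : O8) : 0 ≤ onsq x :=
  Finset.sum_nonneg fun k _ => sq_nonneg _

lemma onsq_pos (x : O8) (hx : x ≠ 0) : 0 < onsq x := by
  rcases lt_or_eq_of_le (onsq_nonneg x) with h | h
  · exact h
  · exfalso
    apply hx
    funext k
    have := (Finset.sum_eq_zero_iff_of_nonneg (fun k _ => sq_nonneg (x k))).mp h.symm k (Finset.mem_univ k)
    exact pow_eq_zero_iff (by norm_num) |>.mp this

lemma mO_add_left (A B C : AM) : mO (A + B) C = mO A C + mO B C := by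
  funext i j
  simp only [mO, Pi.add_apply, octMul_add_left, Finset.sum_add_distrib]

lemma mO_add_right (A B C : AM) : mO A (B + C) = mO A B + mO A C := by
  funext i j
  simp only [mO, Pi.add_apply, octMul_add_right, Finset.sum_add_distrib]

lemma mO_smul_left (r : ℝ) (A B : AM) : mO (r • A) B = r • mO A B := by
  funext i j
  simp only [mO, Pi.smul_apply, octMul_smul_left, ← Finset.smul_sum]

lemma mO_smul_right (r : ℝ) (A B : AM) : mO A (r • B) = r • mO A B := by
  funext i j
  simp only [mO, Pi.smul_apply, octMul_smul_right, ← Finset.smul_sum]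

lemma trA_add (A B : AM) : trA (A + B) = trA A + trA B := by
  simp [trA, Finset.sum_add_distrib]

lemma trA_smul (r : ℝ) (A : AM) : trA (r • A) = r * trA A := by
  simp [trA, Finset.mul_sum]

theorem stmt11 :
    (∀ X Y : AM, herm X → herm Y → trA (jord X Y) = trA (jord Y X)) ∧
    (∀ X X' Y : AM, trA (jord (X + X') Y) = trA (jord X Y) + trA (jord X' Y)) ∧
    (∀ (r : ℝ) (X Y : AM), trA (jord (r • X) Y) = r * trA (jord X Y)) ∧
    (∀ X : AM, herm X → X ≠ 0 → 0 < trA (jord X X)) := by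
  refine ⟨?_, ?_, ?_, ?_⟩
  · intro X Y _ _
    unfold jord
    rw [add_comm]
  · intro X X' Y
    unfold jord
    rw [mO_add_left, mO_add_right]
    rw [show mO X Y + mO X' Y + (mO Y X + mO Y X') = (mO X Y + mO Y X) + (mO X' Y + mO Y X') by abel]
    rw [smul_add, trA_add]
  · intro r X Y
    unfold jord
    rw [mO_smul_left, mO_smul_right, ← smul_add, smul_comm, trA_smul, trA_smul]
  · intro X hX hX0
    have key : trA (jord X X) = ∑ i : Fin 3, ∑ k : Fin 3, onsq (X i k) := by
      unfold jord trA
      refine Finset.sum_congr rfl fun i _ => ?_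
      simp only [Pi.smul_apply, Pi.add_apply, smul_eq_mul, mO]
      rw [show ∀ a : ℝ, (1/2 : ℝ) * (a + a) = a from fun a => by ring]
      rw [Finset.sum_apply]
      refine Finset.sum_congr rfl fun k _ => ?_
      rw [hX i k, octMul_conj_self]
    rw [key]
    obtain ⟨i, hi⟩ : ∃ i, X i ≠ 0 := by
      by_contra h; push_neg at h; exact hX0 (funext h)
    obtain ⟨j, hj⟩ : ∃ j, X i j ≠ 0 := by
      by_contra h; push_neg at h; exact hi (funext h)
    refine Finset.sum_pos' (fun a _ => Finset.sum_nonneg fun b _ => onsq_nonneg _) ⟨i, Finset.mem_univ i, ?_⟩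
    exact Finset.sum_pos' (fun b _ => onsq_nonneg _) ⟨j, Finset.mem_univ j, onsq_pos _ hj⟩
end
end

section
/- For anticommuting imaginary split-octonion units Q₁, Q₂ (Q₂Q₁ = −Q₁Q₂) and orthogonal tracefree elements X₀, Y₀ of H₃(𝕆) with tr(X₀∘Y₀) = 0, the commutator of the Kronecker-type products satisfies [Q₁⊗X₀, Q₂⊗Y₀] = 2 Q₁Q₂ ⊗ (X₀∘Y₀) = 2 Q₁Q₂ ⊗ (X₀*Y₀), where [a⊗M, b⊗N] is computed in the algebra of 3×3 matrices over 𝕆'⊗𝕆 via ordinary matrix commutator. -/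
noncomputable section

open Finset

lemma tMul_tens (a x b y : O8) :
    tMul (tens a x) (tens b y) = tens (soMul a b) (octMul x y) := by
  funext s t
  simp only [tMul, tens, soMul, octMul]
  rw [Finset.sum_mul_sum]
  refine Finset.sum_congr rfl fun i1 _ => ?_
  conv_lhs => rw [Finset.sum_comm]
  refine Finset.sum_congr rfl fun j1 _ => ?_
  rw [Finset.sum_mul_sum]
  refine Finset.sum_congr rfl fun i2 _ => Finset.sum_congr rfl fun j2 _ => ?_
  ring

theorem stmt15 (Q1 Q2 : O8) (h1 : Q1 0 = 0) (h2 : Q2 0 = 0)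
    (hanti : soMul Q2 Q1 = - soMul Q1 Q2)
    (X0 Y0 : AM) (hX : herm X0) (hY : herm Y0)
    (h0X : trA X0 = 0) (h0Y : trA Y0 = 0) (horth : trA (jord X0 Y0) = 0) :
    commT (lab Q1 X0) (lab Q2 Y0) = (2 : ℝ) • lab (soMul Q1 Q2) (jord X0 Y0) ∧
    jord X0 Y0 = frd X0 Y0 := by
  constructor
  · funext i j s t
    simp only [commT, Pi.sub_apply, mT, lab, Finset.sum_apply, tMul_tens, hanti,
      jord, Pi.smul_apply, Pi.add_apply, mO, tens, smul_eq_mul, Pi.neg_apply,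
      Finset.sum_apply, neg_mul, Finset.mul_sum]
    rw [← Finset.sum_sub_distrib]
    have key : ∀ S1 S2 P : ℝ, 2*(P*(1/2*(S1+S2))) = P*S1 + P*S2 := by intros; ring
    rw [key, Finset.mul_sum, Finset.mul_sum, ← Finset.sum_add_distrib]
    exact Finset.sum_congr rfl fun k _ => by ring
  · funext i j
    simp [frd, h0X, h0Y, horth]
end
end

section
/- For the specific normalized type-I Albert algebra element E (tr E = 0, tr(E∘E)=1), the matrix commutator over 𝕆'⊗𝕆 of its null-labeled copies satisfies [Q₁E, Q₂E] = 2Q₁Q₂(E∘E) = Q₁Q₂(I + 2E*E), for anticommuting imaginary split units Q₁, Q₂. -/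
noncomputable section

open Finset

@[simp] lemma octT_0_0 : octTbl 0 0 = (1, 0) := rfl
@[simp] lemma octT_0_1 : octTbl 0 1 = (1, 1) := rfl
@[simp] lemma octT_0_2 : octTbl 0 2 = (1, 2) := rfl
@[simp] lemma octT_0_3 : octTbl 0 3 = (1, 3) := rfl
@[simp] lemma octT_0_4 : octTbl 0 4 = (1, 4) := rfl
@[simp] lemma octT_0_5 : octTbl 0 5 = (1, 5) := rfl
@[simp] lemma octT_0_6 : octTbl 0 6 = (1, 6) := rfl
@[simp] lemma octT_0_7 : octTbl 0 7 = (1, 7) := rfl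
@[simp] lemma octT_1_0 : octTbl 1 0 = (1, 1) := rfl
@[simp] lemma octT_1_1 : octTbl 1 1 = (-1, 0) := rfl
@[simp] lemma octT_1_2 : octTbl 1 2 = (1, 3) := rfl
@[simp] lemma octT_1_3 : octTbl 1 3 = (-1, 2) := rfl
@[simp] lemma octT_1_4 : octTbl 1 4 = (1, 5) := rfl
@[simp] lemma octT_1_5 : octTbl 1 5 = (-1, 4) := rfl
@[simp] lemma octT_1_6 : octTbl 1 6 = (1, 7) := rfl
@[simp] lemma octT_1_7 : octTbl 1 7 = (1, 6) := rfl
@[simp] lemma octT_2_0 : octTbl 2 0 = (1, 2) := rfl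
@[simp] lemma octT_2_1 : octTbl 2 1 = (-1, 3) := rfl
@[simp] lemma octT_2_2 : octTbl 2 2 = (-1, 0) := rfl
@[simp] lemma octT_2_3 : octTbl 2 3 = (1, 1) := rfl
@[simp] lemma octT_2_4 : octTbl 2 4 = (-1, 6) := rfl
@[simp] lemma octT_2_5 : octTbl 2 5 = (1, 7) := rfl
@[simp] lemma octT_2_6 : octTbl 2 6 = (1, 4) := rfl
@[simp] lemma octT_2_7 : octTbl 2 7 = (1, 5) := rfl
@[simp] lemma octT_3_0 : octTbl 3 0 = (1, 3) := rfl
@[simp] lemma octT_3_1 : octTbl 3 1 = (1, 2) := rfl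
@[simp] lemma octT_3_2 : octTbl 3 2 = (-1, 1) := rfl
@[simp] lemma octT_3_3 : octTbl 3 3 = (-1, 0) := rfl
@[simp] lemma octT_3_4 : octTbl 3 4 = (-1, 7) := rfl
@[simp] lemma octT_3_5 : octTbl 3 5 = (1, 6) := rfl
@[simp] lemma octT_3_6 : octTbl 3 6 = (-1, 5) := rfl
@[simp] lemma octT_3_7 : octTbl 3 7 = (1, 4) := rfl
@[simp] lemma octT_4_0 : octTbl 4 0 = (1, 4) := rfl
@[simp] lemma octT_4_1 : octTbl 4 1 = (-1, 5) := rfl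
@[simp] lemma octT_4_2 : octTbl 4 2 = (1, 6) := rfl
@[simp] lemma octT_4_3 : octTbl 4 3 = (1, 7) := rfl
@[simp] lemma octT_4_4 : octTbl 4 4 = (-1, 0) := rfl
@[simp] lemma octT_4_5 : octTbl 4 5 = (1, 1) := rfl
@[simp] lemma octT_4_6 : octTbl 4 6 = (-1, 2) := rfl
@[simp] lemma octT_4_7 : octTbl 4 7 = (-1, 3) := rfl
@[simp] lemma octT_5_0 : octTbl 5 0 = (1, 5) := rfl
@[simp] lemma octT_5_1 : octTbl 5 1 = (1, 4) := rfl
@[simp] lemma octT_5_2 : octTbl 5 2 = (1, 7) := rfl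
@[simp] lemma octT_5_3 : octTbl 5 3 = (-1, 6) := rfl
@[simp] lemma octT_5_4 : octTbl 5 4 = (-1, 1) := rfl
@[simp] lemma octT_5_5 : octTbl 5 5 = (-1, 0) := rfl
@[simp] lemma octT_5_6 : octTbl 5 6 = (1, 3) := rfl
@[simp] lemma octT_5_7 : octTbl 5 7 = (-1, 2) := rfl
@[simp] lemma octT_6_0 : octTbl 6 0 = (1, 6) := rfl
@[simp] lemma octT_6_1 : octTbl 6 1 = (1, 7) := rfl
@[simp] lemma octT_6_2 : octTbl 6 2 = (-1, 4) := rfl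
@[simp] lemma octT_6_3 : octTbl 6 3 = (1, 5) := rfl
@[simp] lemma octT_6_4 : octTbl 6 4 = (1, 2) := rfl
@[simp] lemma octT_6_5 : octTbl 6 5 = (-1, 3) := rfl
@[simp] lemma octT_6_6 : octTbl 6 6 = (-1, 0) := rfl
@[simp] lemma octT_6_7 : octTbl 6 7 = (-1, 1) := rfl
@[simp] lemma octT_7_0 : octTbl 7 0 = (1, 7) := rfl
@[simp] lemma octT_7_1 : octTbl 7 1 = (-1, 6) := rfl
@[simp] lemma octT_7_2 : octTbl 7 2 = (-1, 5) := rfl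
@[simp] lemma octT_7_3 : octTbl 7 3 = (-1, 4) := rfl
@[simp] lemma octT_7_4 : octTbl 7 4 = (1, 3) := rfl
@[simp] lemma octT_7_5 : octTbl 7 5 = (1, 2) := rfl
@[simp] lemma octT_7_6 : octTbl 7 6 = (1, 1) := rfl
@[simp] lemma octT_7_7 : octTbl 7 7 = (-1, 0) := rfl

lemma octMul_zero_comp (x y : O8) : octMul x y 0 =
    x 0 * y 0 - x 1 * y 1 - x 2 * y 2 - x 3 * y 3 - x 4 * y 4 - x 5 * y 5 - x 6 * y 6 - x 7 * y 7 := by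
  simp only [octMul, Fin.sum_univ_eight, octT_0_0, octT_0_1, octT_0_2, octT_0_3, octT_0_4,
    octT_0_5, octT_0_6, octT_0_7, octT_1_0, octT_1_1, octT_1_2, octT_1_3, octT_1_4, octT_1_5,
    octT_1_6, octT_1_7, octT_2_0, octT_2_1, octT_2_2, octT_2_3, octT_2_4, octT_2_5, octT_2_6,
    octT_2_7, octT_3_0, octT_3_1, octT_3_2, octT_3_3, octT_3_4, octT_3_5, octT_3_6, octT_3_7,
    octT_4_0, octT_4_1, octT_4_2, octT_4_3, octT_4_4, octT_4_5, octT_4_6, octT_4_7, octT_5_0,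
    octT_5_1, octT_5_2, octT_5_3, octT_5_4, octT_5_5, octT_5_6, octT_5_7, octT_6_0, octT_6_1,
    octT_6_2, octT_6_3, octT_6_4, octT_6_5, octT_6_6, octT_6_7, octT_7_0, octT_7_1, octT_7_2,
    octT_7_3, octT_7_4, octT_7_5, octT_7_6, octT_7_7]
  simp only [Fin.reduceEq, reduceIte, show ((0:Fin 8)=0)=True from by simp]
  ring

lemma sum_swap4 (F : Fin 8 → Fin 8 → Fin 8 → Fin 8 → ℝ) :
    (∑ a : Fin 8, ∑ b : Fin 8, ∑ c : Fin 8, ∑ d : Fin 8, F a b c d) =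
      ∑ c : Fin 8, ∑ d : Fin 8, ∑ a : Fin 8, ∑ b : Fin 8, F a b c d := by
  calc (∑ a : Fin 8, ∑ b : Fin 8, ∑ c : Fin 8, ∑ d : Fin 8, F a b c d)
      = ∑ a : Fin 8, ∑ c : Fin 8, ∑ b : Fin 8, ∑ d : Fin 8, F a b c d :=
        Finset.sum_congr rfl fun a _ => Finset.sum_comm
    _ = ∑ c : Fin 8, ∑ a : Fin 8, ∑ b : Fin 8, ∑ d : Fin 8, F a b c d :=
        Finset.sum_comm
    _ = ∑ c : Fin 8, ∑ a : Fin 8, ∑ d : Fin 8, ∑ b : Fin 8, F a b c d :=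
        Finset.sum_congr rfl fun c _ => Finset.sum_congr rfl fun a _ => Finset.sum_comm
    _ = ∑ c : Fin 8, ∑ d : Fin 8, ∑ a : Fin 8, ∑ b : Fin 8, F a b c d :=
        Finset.sum_congr rfl fun c _ => Finset.sum_comm

lemma tens_tmul (a b x y : O8) :
    tMul (tens a x) (tens b y) = tens (soMul a b) (octMul x y) := by
  funext s t
  simp only [tMul, tens, soMul, octMul, Finset.sum_mul, Finset.mul_sum]
  rw [sum_swap4]
  refine Finset.sum_congr rfl fun i1 _ => Finset.sum_congr rfl fun i2 _ =>
    Finset.sum_congr rfl fun j1 _ => Finset.sum_congr rfl fun j2 _ => by ring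

lemma EI00 (z : ℝ) (e : O8) : EI z e 0 0 = z • oe 0 := rfl
lemma EI01 (z : ℝ) (e : O8) : EI z e 0 1 = e := rfl
lemma EI02 (z : ℝ) (e : O8) : EI z e 0 2 = 0 := rfl
lemma EI10 (z : ℝ) (e : O8) : EI z e 1 0 = oconj e := rfl
lemma EI11 (z : ℝ) (e : O8) : EI z e 1 1 = (-z) • oe 0 := rfl
lemma EI12 (z : ℝ) (e : O8) : EI z e 1 2 = 0 := rfl
lemma EI20 (z : ℝ) (e : O8) : EI z e 2 0 = 0 := rfl
lemma EI21 (z : ℝ) (e : O8) : EI z e 2 1 = 0 := rfl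
lemma EI22 (z : ℝ) (e : O8) : EI z e 2 2 = 0 := rfl

lemma trEI (z : ℝ) (e : O8) : trA (EI z e) = 0 := by
  simp [trA, Fin.sum_univ_three, EI00, EI11, EI22, oe]

lemma trJEI (z : ℝ) (e : O8) (hnorm : 2 * (z^2 + onsq e) = 1) :
    trA (jord (EI z e) (EI z e)) = 1 := by
  simp only [onsq, Fin.sum_univ_eight] at hnorm
  simp only [trA, jord, mO, Pi.smul_apply, Pi.add_apply, Finset.sum_apply,
    Fin.sum_univ_three, smul_eq_mul, octMul_zero_comp,
    EI00, EI01, EI02, EI10, EI11, EI12, EI20, EI21, EI22, oe, oconj,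
    Pi.zero_apply, Fin.reduceEq, reduceIte, show ((0:Fin 8)=0)=True from by simp]
  norm_num
  linear_combination hnorm

lemma tens_neg (a x : O8) : tens (-a) x = -(tens a x) := by
  funext s t; simp [tens]

theorem stmt17 (z : ℝ) (e : O8) (hnorm : 2 * (z^2 + onsq e) = 1)
    (Q1 Q2 : O8) (h1 : Q1 0 = 0) (h2 : Q2 0 = 0)
    (hanti : soMul Q2 Q1 = - soMul Q1 Q2) :
    commT (lab Q1 (EI z e)) (lab Q2 (EI z e)) =
      (2 : ℝ) • lab (soMul Q1 Q2) (jord (EI z e) (EI z e)) ∧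
    (2 : ℝ) • lab (soMul Q1 Q2) (jord (EI z e) (EI z e)) =
      lab (soMul Q1 Q2) (idA + (2 : ℝ) • frd (EI z e) (EI z e)) := by
  constructor
  · funext i j s t
    simp only [commT, mT, lab, tens_tmul, hanti, tens_neg, jord, mO,
      Pi.sub_apply, Pi.neg_apply, Pi.smul_apply, Pi.add_apply,
      Finset.sum_apply, Fin.sum_univ_three, tens, smul_eq_mul]
    ring
  · funext i j s t
    simp only [lab, tens, frd, trEI, trJEI z e hnorm, Pi.smul_apply, Pi.add_apply,
      Pi.sub_apply, Pi.zero_apply, smul_eq_mul, zero_smul, mul_zero, zero_mul,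
      add_zero, zero_add]
    ring
end
end
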